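/- (Third-order HOCBF with linear class K functions.) Let ψ : ℝ → ℝ be three times differentiable. If ψ(0) ≥ 0, ψ'(0) + ψ(0) ≥ 0, ψ''(0) + 2ψ'(0) + ψ(0) ≥ 0, and ψ'''(t) + 3ψ''(t) + 3ψ'(t) + ψ(t) ≥ 0 for all t ≥ 0, then ψ(t) ≥ 0, ψ'(t) + ψ(t) ≥ 0, and ψ''(t) + 2ψ'(t) + ψ(t) ≥ 0 for all t ≥ 0. -/

import Mathlib

/-- Grönwall-type lemma: if `g` is differentiable, `g 0 ≥ 0`, and
`g' t + g t ≥ 0` for `t ≥ 0`, then `g t ≥ 0` for `t ≥ 0`. -/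
lemma gronwall_aux (g : ℝ → ℝ) (hg : Differentiable ℝ g)
    (hd : ∀ t, HasDerivAt g (deriv g t) t)
    (h0 : 0 ≤ g 0) (h : ∀ t, 0 ≤ t → 0 ≤ deriv g t + g t) :
    ∀ t, 0 ≤ t → 0 ≤ g t := by
  intro t ht
  have hD : ∀ s : ℝ, HasDerivAt (fun u => Real.exp u * g u)
      (Real.exp s * (deriv g s + g s)) s := by
    intro s
    have := (Real.hasDerivAt_exp s).mul (hd s)
    exact this.congr_deriv (by ring)
  have hmono : MonotoneOn (fun u => Real.exp u * g u) (Set.Ici (0:ℝ)) := by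
    apply monotoneOn_of_deriv_nonneg (convex_Ici 0)
    · exact (((Real.continuous_exp).mul hg.continuous)).continuousOn
    · intro s hs
      exact (hD s).differentiableAt.differentiableWithinAt
    · intro s hs
      rw [(hD s).deriv]
      have hs' : (0:ℝ) ≤ s := le_of_lt (by simpa using hs)
      exact mul_nonneg (Real.exp_pos s).le (h s hs')
  have := hmono (Set.self_mem_Ici) (Set.mem_Ici.mpr ht) ht
  simp only [Real.exp_zero, one_mul] at this
  have h0' : (0:ℝ) ≤ Real.exp t * g t := le_trans h0 this
  nlinarith [Real.exp_pos t]

theorem hocbf_third_order_linear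
    (ψ : ℝ → ℝ)
    (hψ : Differentiable ℝ ψ) (hψ' : Differentiable ℝ (deriv ψ))
    (hψ'' : Differentiable ℝ (deriv (deriv ψ)))
    (h0 : ψ 0 ≥ 0)
    (h1 : deriv ψ 0 + ψ 0 ≥ 0)
    (h2 : deriv (deriv ψ) 0 + 2 * deriv ψ 0 + ψ 0 ≥ 0)
    (hconstr : ∀ t : ℝ, 0 ≤ t →
      deriv (deriv (deriv ψ)) t + 3 * deriv (deriv ψ) t
        + 3 * deriv ψ t + ψ t ≥ 0) :
    ∀ t : ℝ, 0 ≤ t → ψ t ≥ 0 ∧ deriv ψ t + ψ t ≥ 0 ∧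
      deriv (deriv ψ) t + 2 * deriv ψ t + ψ t ≥ 0 := by
  -- φ₃ = ψ'' + 2ψ' + ψ
  set φ₃ : ℝ → ℝ := fun s => deriv (deriv ψ) s + 2 * deriv ψ s + ψ s with hφ₃
  have hd3 : ∀ t, HasDerivAt φ₃
      (deriv (deriv (deriv ψ)) t + 2 * deriv (deriv ψ) t + deriv ψ t) t := by
    intro t
    exact ((hψ'' t).hasDerivAt.add ((hψ' t).hasDerivAt.const_mul 2)).add
      (hψ t).hasDerivAt
  have hg3 : Differentiable ℝ φ₃ := fun t => (hd3 t).differentiableAt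
  have h3 : ∀ t, 0 ≤ t → 0 ≤ φ₃ t := by
    apply gronwall_aux φ₃ hg3 (fun t => (hg3 t).hasDerivAt) h2
    intro t ht
    rw [(hd3 t).deriv]
    have := hconstr t ht
    simp only [hφ₃]
    linarith
  -- φ₂ = ψ' + ψ
  set φ₂ : ℝ → ℝ := fun s => deriv ψ s + ψ s with hφ₂
  have hd2 : ∀ t, HasDerivAt φ₂ (deriv (deriv ψ) t + deriv ψ t) t :=
    fun t => (hψ' t).hasDerivAt.add (hψ t).hasDerivAt
  have hg2 : Differentiable ℝ φ₂ := fun t => (hd2 t).differentiableAt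
  have h2' : ∀ t, 0 ≤ t → 0 ≤ φ₂ t := by
    apply gronwall_aux φ₂ hg2 (fun t => (hg2 t).hasDerivAt) h1
    intro t ht
    rw [(hd2 t).deriv]
    have := h3 t ht
    simp only [hφ₃] at this
    simp only [hφ₂]
    linarith
  have h1' : ∀ t, 0 ≤ t → 0 ≤ ψ t := by
    apply gronwall_aux ψ hψ (fun t => (hψ t).hasDerivAt) h0
    intro t ht
    have := h2' t ht
    simp only [hφ₂] at this
    linarith
  intro t ht
  refine ⟨h1' t ht, ?_, ?_⟩
  · have := h2' t ht; simpa [hφ₂] using this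
  · have := h3 t ht; simpa [hφ₃] using this
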